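/- Let ℓ: ℝ × ℝ → ℝ be a loss function such that ℓ(y,·) is convex for every y, and let λ > 0. Then the optimal value of the ℓ₂-regularized cardinality-penalized problem, inf over w ∈ ℝ^p of Σ_{i=1}^n ℓ(y_i, x_iᵀw) + (1/(2γ))‖w‖₂² + λ‖w‖₀, equals inf over s ∈ {0,1}^p of sup_{α ∈ ℝ^n} (f(α,s) + λ Σ_{j=1}^p s_j) (equality of values in the extended reals). -/

import Mathlib

open scoped BigOperators

private lemma key_sq {γ : ℝ} (hγ : 0 < γ) (a b : ℝ) :
    0 ≤ a * b + 1 / (2 * γ) * a ^ 2 + γ / 2 * b ^ 2 := by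
  have h : a * b + 1 / (2 * γ) * a ^ 2 + γ / 2 * b ^ 2 = (a + γ * b) ^ 2 / (2 * γ) := by
    field_simp
    ring
  rw [h]; positivity

/-- Subgradient existence for a finite convex function on a fin.dim. space. -/
private lemma exists_subgradient {E : Type*} [NormedAddCommGroup E] [NormedSpace ℝ E]
    [FiniteDimensional ℝ E] (f : E → ℝ) (hf : ConvexOn ℝ Set.univ f) (x₀ : E) :
    ∃ g : E →L[ℝ] ℝ, ∀ u, f x₀ + g (u - x₀) ≤ f u := by
  have hcont : Continuous f := hf.locallyLipschitz.continuous
  set A : Set (E × ℝ) := {z | f z.1 < z.2} with hA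
  have hopen : IsOpen A := isOpen_lt (hcont.comp continuous_fst) continuous_snd
  have hconvA : Convex ℝ A := by
    intro z hz z' hz' a b ha hb hab
    simp only [hA, Set.mem_setOf_eq] at *
    have := hf.2 (Set.mem_univ z.1) (Set.mem_univ z'.1) ha hb hab
    calc f (a • z + b • z').1 = f (a • z.1 + b • z'.1) := rfl
      _ ≤ a * f z.1 + b * f z'.1 := this
      _ < a * z.2 + b * z'.2 := by
          rcases eq_or_lt_of_le ha with rfl | ha'
          · simp only [zero_mul, zero_add]
            have hb1 : b = 1 := by linarith
            have := hz'
            nlinarith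
          · rcases eq_or_lt_of_le hb with rfl | hb'
            · have ha1 : a = 1 := by linarith
              nlinarith
            · nlinarith
      _ = (a • z + b • z').2 := rfl
  have hx₀ : (x₀, f x₀) ∉ A := by simp [hA]
  obtain ⟨φ, hφ⟩ := geometric_hahn_banach_open_point hconvA hopen hx₀
  set c : ℝ := φ (0, 1) with hc
  have hdecomp : ∀ (u : E) (t : ℝ), φ (u, t) = φ (u, 0) + t * c := by
    intro u t
    have : (u, t) = (u, 0) + t • ((0 : E), (1 : ℝ)) := by
      simp [Prod.ext_iff]
    rw [this, map_add, map_smul, smul_eq_mul, hc]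
  have hcneg : c < 0 := by
    have h1 : ((x₀, f x₀ + 1) : E × ℝ) ∈ A := by simp [hA]
    have h2 := hφ _ h1
    have e1 := hdecomp x₀ (f x₀ + 1)
    have e2 := hdecomp x₀ (f x₀)
    nlinarith [h2, e1, e2]
  have hkey : ∀ u : E, φ (u, 0) + f u * c ≤ φ (x₀, 0) + f x₀ * c := by
    intro u
    by_contra hcon
    push_neg at hcon
    set ε : ℝ := (φ (u, 0) + f u * c - (φ (x₀, 0) + f x₀ * c)) / (-c) with hε
    have hεpos : 0 < ε := by
      apply div_pos <;> linarith
    have hmem : ((u, f u + ε) : E × ℝ) ∈ A := by simp [hA, hεpos]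
    have h2 := hφ _ hmem
    have e1 := hdecomp u (f u + ε)
    have e2 := hdecomp x₀ (f x₀)
    have hεc : ε * (-c) = φ (u, 0) + f u * c - (φ (x₀, 0) + f x₀ * c) :=
      div_mul_cancel₀ _ (by linarith : (-c) ≠ 0)
    nlinarith [h2, e1, e2, hεc]
  refine ⟨((-c)⁻¹) • (φ.comp (ContinuousLinearMap.inl ℝ E ℝ)), fun u => ?_⟩
  have h := hkey u
  have hφsub : φ (u - x₀, 0) = φ (u, 0) - φ (x₀, 0) := by
    have : ((u - x₀, (0:ℝ)) : E × ℝ) = (u, 0) - (x₀, 0) := by simp [Prod.ext_iff]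
    rw [this, map_sub]
  simp only [ContinuousLinearMap.smul_apply, ContinuousLinearMap.comp_apply,
    ContinuousLinearMap.inl_apply, smul_eq_mul]
  rw [hφsub]
  have hI : (0:ℝ) < (-c)⁻¹ := inv_pos.2 (by linarith)
  have hc0 : c ≠ 0 := by linarith
  have h3 := mul_le_mul_of_nonneg_left h hI.le
  rw [mul_add, mul_add] at h3
  have h4 : (-c)⁻¹ * (f u * c) = -f u := by field_simp
  have h5 : (-c)⁻¹ * (f x₀ * c) = -f x₀ := by field_simp
  rw [h4, h5] at h3
  rw [mul_sub]
  linarith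

private lemma oneD_minorant (g : ℝ → ℝ) (hg : ConvexOn ℝ Set.univ g) :
    ∃ β : ℝ, ∀ v, g 0 + β * v ≤ g v := by
  obtain ⟨G, hG⟩ := exists_subgradient g hg 0
  refine ⟨G 1, fun v => ?_⟩
  have := hG v
  rw [sub_zero] at this
  have hGv : G v = G 1 * v := by
    conv_lhs => rw [show v = v • (1 : ℝ) by simp, map_smul, smul_eq_mul]
    ring
  linarith [hGv ▸ this]

private lemma ereal_coe_sum {ι : Type*} (s : Finset ι) (g : ι → ℝ) :
    ((∑ i ∈ s, g i : ℝ) : EReal) = ∑ i ∈ s, (g i : EReal) := by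
  classical
  induction s using Finset.induction with
  | empty => simp
  | insert a t hx ih => rw [Finset.sum_insert hx, Finset.sum_insert hx, EReal.coe_add, ih]

private lemma ereal_le_coe_of_forall {a : EReal} {b : ℝ}
    (h : ∀ ε : ℝ, 0 < ε → a ≤ ((b + ε : ℝ) : EReal)) : a ≤ (b : EReal) := by
  by_contra hc
  push_neg at hc
  obtain ⟨x, hbx, hxa⟩ := EReal.exists_between_coe_real hc
  have := h (x - b) (by exact_mod_cast sub_pos.2 (EReal.coe_lt_coe_iff.1 hbx))
  rw [show b + (x - b) = x by ring] at this
  exact absurd (this.trans_lt hxa) (lt_irrefl _)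

private lemma ereal_isup_eq_coe_sSup (F : ℝ → ℝ) (hbdd : BddAbove (Set.range F)) :
    (⨆ u : ℝ, ((F u : ℝ) : EReal)) = ((sSup (Set.range F) : ℝ) : EReal) := by
  apply le_antisymm
  · exact iSup_le fun u => EReal.coe_le_coe_iff.2 (le_csSup hbdd ⟨u, rfl⟩)
  · by_contra hc
    push_neg at hc
    obtain ⟨x, h1, h2⟩ := EReal.exists_between_coe_real hc
    obtain ⟨_, ⟨v, rfl⟩, hv⟩ := exists_lt_of_lt_csSup (Set.range_nonempty F)
      (EReal.coe_lt_coe_iff.1 h2)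
    exact absurd ((le_iSup (fun u => ((F u : ℝ) : EReal)) v).trans_lt
      (h1.trans (EReal.coe_lt_coe_iff.2 hv))) (lt_irrefl _)

private lemma sum_swap_mul {n p : ℕ} (X : Matrix (Fin n) (Fin p) ℝ)
    (w : Fin p → ℝ) (g : Fin n → ℝ) :
    ∑ i, g i * (∑ j, X i j * w j) = ∑ j, (∑ i, X i j * g i) * w j := by
  simp_rw [Finset.mul_sum]
  rw [Finset.sum_comm]
  refine Finset.sum_congr rfl fun j _ => ?_
  rw [Finset.sum_mul]
  refine Finset.sum_congr rfl fun i _ => by ring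

private lemma obj_lower_bound {n p : ℕ} (X : Matrix (Fin n) (Fin p) ℝ) (y : Fin n → ℝ)
    {γ : ℝ} (hγ : 0 < γ) (ℓ : ℝ → ℝ → ℝ) (β : Fin n → ℝ)
    (hβ : ∀ i v, ℓ (y i) 0 + β i * v ≤ ℓ (y i) v) (u : Fin n → ℝ) (w : Fin p → ℝ) :
    (∑ i, ℓ (y i) 0 - γ / 2 * ∑ j, (∑ i, X i j * β i) ^ 2) + ∑ i, β i * u i ≤
      ∑ i, ℓ (y i) (u i + ∑ j, X i j * w j) + 1 / (2 * γ) * ∑ j, (w j) ^ 2 := by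
  have h1 : ∑ i, (ℓ (y i) 0 + β i * (u i + ∑ j, X i j * w j)) ≤
      ∑ i, ℓ (y i) (u i + ∑ j, X i j * w j) :=
    Finset.sum_le_sum fun i _ => hβ i _
  have h2 : ∑ i, (ℓ (y i) 0 + β i * (u i + ∑ j, X i j * w j)) =
      ∑ i, ℓ (y i) 0 + ∑ i, β i * u i + ∑ j, (∑ i, X i j * β i) * w j := by
    rw [Finset.sum_add_distrib]
    simp_rw [mul_add]
    rw [Finset.sum_add_distrib, sum_swap_mul X w β, add_assoc]
  have h3 : 0 ≤ ∑ j, (w j * (∑ i, X i j * β i) + 1 / (2 * γ) * (w j) ^ 2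
      + γ / 2 * (∑ i, X i j * β i) ^ 2) :=
    Finset.sum_nonneg fun j _ => key_sq hγ (w j) _
  rw [Finset.sum_add_distrib, Finset.sum_add_distrib, ← Finset.mul_sum, ← Finset.mul_sum] at h3
  have h4 : ∑ j, w j * (∑ i, X i j * β i) = ∑ j, (∑ i, X i j * β i) * w j :=
    Finset.sum_congr rfl fun j _ => mul_comm _ _
  linarith

private lemma obj_combo {n p : ℕ} (X : Matrix (Fin n) (Fin p) ℝ) (y : Fin n → ℝ)
    {γ : ℝ} (hγ : 0 < γ) (ℓ : ℝ → ℝ → ℝ) (hconv : ∀ z : ℝ, ConvexOn ℝ Set.univ (ℓ z))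
    (u u' : Fin n → ℝ) (w w' : Fin p → ℝ) {a b : ℝ} (ha : 0 ≤ a) (hb : 0 ≤ b)
    (hab : a + b = 1) :
    ∑ i, ℓ (y i) ((a • u + b • u') i + ∑ j, X i j * (a • w + b • w') j)
        + 1 / (2 * γ) * ∑ j, ((a • w + b • w') j) ^ 2 ≤
      a * (∑ i, ℓ (y i) (u i + ∑ j, X i j * w j) + 1 / (2 * γ) * ∑ j, (w j) ^ 2)
        + b * (∑ i, ℓ (y i) (u' i + ∑ j, X i j * w' j) + 1 / (2 * γ) * ∑ j, (w' j) ^ 2) := by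
  have harg : ∀ i, (a • u + b • u') i + ∑ j, X i j * (a • w + b • w') j =
      a * (u i + ∑ j, X i j * w j) + b * (u' i + ∑ j, X i j * w' j) := by
    intro i
    simp only [Pi.add_apply, Pi.smul_apply, smul_eq_mul]
    rw [Finset.sum_congr rfl fun j (_ : j ∈ Finset.univ) =>
      (by ring : X i j * (a * w j + b * w' j) = a * (X i j * w j) + b * (X i j * w' j)),
      Finset.sum_add_distrib, ← Finset.mul_sum, ← Finset.mul_sum]
    ring
  have h1 : ∑ i, ℓ (y i) ((a • u + b • u') i + ∑ j, X i j * (a • w + b • w') j) ≤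
      a * ∑ i, ℓ (y i) (u i + ∑ j, X i j * w j)
        + b * ∑ i, ℓ (y i) (u' i + ∑ j, X i j * w' j) := by
    rw [Finset.mul_sum, Finset.mul_sum, ← Finset.sum_add_distrib]
    refine Finset.sum_le_sum fun i _ => ?_
    rw [harg i]
    exact (hconv (y i)).2 (Set.mem_univ _) (Set.mem_univ _) ha hb hab
  have h2 : ∑ j, ((a • w + b • w') j) ^ 2 ≤ a * ∑ j, (w j) ^ 2 + b * ∑ j, (w' j) ^ 2 := by
    rw [Finset.mul_sum, Finset.mul_sum, ← Finset.sum_add_distrib]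
    refine Finset.sum_le_sum fun j _ => ?_
    simp only [Pi.add_apply, Pi.smul_apply, smul_eq_mul]
    nlinarith [sq_nonneg (w j - w' j), mul_nonneg ha hb]
  have h3 : 1 / (2 * γ) * ∑ j, ((a • w + b • w') j) ^ 2 ≤
      1 / (2 * γ) * (a * ∑ j, (w j) ^ 2 + b * ∑ j, (w' j) ^ 2) :=
    mul_le_mul_of_nonneg_left h2 (by positivity)
  nlinarith [h1, h3]

private lemma strong_duality {n p : ℕ} (X : Matrix (Fin n) (Fin p) ℝ) (y : Fin n → ℝ)
    {γ : ℝ} (hγ : 0 < γ) (ℓ : ℝ → ℝ → ℝ) (hconv : ∀ z : ℝ, ConvexOn ℝ Set.univ (ℓ z))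
    (s : Fin p → ℝ) (hs : ∀ j, s j = 0 ∨ s j = 1) :
    ∃ (α : Fin n → ℝ) (h0 : ℝ),
      (∀ ε : ℝ, 0 < ε → ∃ w : Fin p → ℝ, (∀ j, s j = 0 → w j = 0) ∧
        ∑ i, ℓ (y i) (∑ j, X i j * w j) + 1 / (2 * γ) * ∑ j, (w j) ^ 2 < h0 + ε) ∧
      ((h0 : EReal) ≤
        -(∑ i, ⨆ u : ℝ, ((u * α i - ℓ (y i) u : ℝ) : EReal))
          - ((γ / 2 * ∑ j, s j * (∑ i, X i j * α i) ^ 2 : ℝ) : EReal)) := by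
  classical
  choose β hβ using fun i => oneD_minorant (ℓ (y i)) (hconv (y i))
  set K : Set (Fin p → ℝ) := {w | ∀ j, s j = 0 → w j = 0} with hK
  have hK0 : (0 : Fin p → ℝ) ∈ K := fun j _ => rfl
  set Obj : (Fin n → ℝ) → (Fin p → ℝ) → ℝ := fun u w =>
    ∑ i, ℓ (y i) (u i + ∑ j, X i j * w j) + 1 / (2 * γ) * ∑ j, (w j) ^ 2 with hObj
  have hlb : ∀ u w, (∑ i, ℓ (y i) 0 - γ / 2 * ∑ j, (∑ i, X i j * β i) ^ 2)
      + ∑ i, β i * u i ≤ Obj u w := fun u w => obj_lower_bound X y hγ ℓ β hβ u w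
  have hne : ∀ u : Fin n → ℝ, (Obj u '' K).Nonempty := fun u => ⟨Obj u 0, 0, hK0, rfl⟩
  have hbdd : ∀ u : Fin n → ℝ, BddBelow (Obj u '' K) := fun u =>
    ⟨_, by rintro x ⟨w, hw, rfl⟩; exact hlb u w⟩
  set h : (Fin n → ℝ) → ℝ := fun u => sInf (Obj u '' K) with hh
  have hh_le : ∀ u w, w ∈ K → h u ≤ Obj u w := fun u w hw => csInf_le (hbdd u) ⟨w, hw, rfl⟩
  have hconvh : ConvexOn ℝ Set.univ h := by
    refine ⟨convex_univ, fun u _ u' _ a b ha hb hab => ?_⟩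
    refine le_of_forall_pos_le_add fun ε hε => ?_
    obtain ⟨x, ⟨w, hwK, rfl⟩, hx⟩ := Real.lt_sInf_add_pos (hne u) (half_pos hε)
    obtain ⟨x', ⟨w', hw'K, rfl⟩, hx'⟩ := Real.lt_sInf_add_pos (hne u') (half_pos hε)
    have hcombo : a • w + b • w' ∈ K := fun j hj => by
      simp [hwK j hj, hw'K j hj]
    have h1 : h (a • u + b • u') ≤ Obj (a • u + b • u') (a • w + b • w') :=
      hh_le _ _ hcombo
    have h2 := obj_combo X y hγ ℓ hconv u u' w w' ha hb hab
    have h3 : a * Obj u w ≤ a * (h u + ε / 2) := mul_le_mul_of_nonneg_left hx.le ha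
    have h4 : b * Obj u' w' ≤ b * (h u' + ε / 2) := mul_le_mul_of_nonneg_left hx'.le hb
    calc h (a • u + b • u') ≤ _ := h1
      _ ≤ a * Obj u w + b * Obj u' w' := h2
      _ ≤ a * (h u + ε / 2) + b * (h u' + ε / 2) := add_le_add h3 h4
      _ = a * h u + b * h u' + (a + b) * (ε / 2) := by ring
      _ ≤ a * h u + b * h u' + ε := by rw [hab]; linarith
  obtain ⟨G, hG⟩ := exists_subgradient h hconvh 0
  set α : Fin n → ℝ := fun i => G (fun j => if i = j then 1 else 0) with hα
  have hGsum : ∀ u : Fin n → ℝ, G u = ∑ i, u i * α i := by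
    intro u
    have := LinearMap.pi_apply_eq_sum_univ (G : (Fin n → ℝ) →ₗ[ℝ] ℝ) u
    simpa [smul_eq_mul, hα] using this
  set t : Fin p → ℝ := fun j => ∑ i, X i j * α i with ht
  set h0 : ℝ := h 0 with hh0
  have hsub : ∀ u, h0 + G u ≤ h u := fun u => by
    have := hG u; rwa [sub_zero] at this
  have hkey : ∀ (v : Fin n → ℝ) (w : Fin p → ℝ), w ∈ K →
      h0 + ∑ i, v i * α i - ∑ j, t j * w j ≤
        ∑ i, ℓ (y i) (v i) + 1 / (2 * γ) * ∑ j, (w j) ^ 2 := by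
    intro v w hw
    set u : Fin n → ℝ := fun i => v i - ∑ j, X i j * w j with hu
    have h1 : h u ≤ Obj u w := hh_le u w hw
    have h2 := hsub u
    have harg : ∀ i, u i + ∑ j, X i j * w j = v i := by
      intro i
      simp only [hu]
      ring
    have h3 : Obj u w = ∑ i, ℓ (y i) (v i) + 1 / (2 * γ) * ∑ j, (w j) ^ 2 := by
      simp only [hObj]
      congr 1
      exact Finset.sum_congr rfl fun i _ => by rw [harg i]
    have h4 : G u = ∑ i, v i * α i - ∑ j, t j * w j := by
      rw [hGsum u, hu]
      simp only [sub_mul]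
      rw [Finset.sum_sub_distrib]
      congr 1
      rw [← sum_swap_mul X w α]
      refine Finset.sum_congr rfl fun i _ => by ring
    rw [h4] at h2
    calc h0 + ∑ i, v i * α i - ∑ j, t j * w j
        ≤ h u := by rw [add_sub_assoc]; exact h2
      _ ≤ Obj u w := h1
      _ = _ := h3
  set w₀ : Fin p → ℝ := fun j => if s j = 0 then 0 else -γ * t j with hw₀
  have hw₀K : w₀ ∈ K := fun j hj => by simp [hw₀, hj]
  set q : ℝ := γ / 2 * ∑ j, s j * (t j) ^ 2 with hq
  have hγ0 : γ ≠ 0 := ne_of_gt hγ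
  have hqsum : 1 / (2 * γ) * ∑ j, (w₀ j) ^ 2 + ∑ j, t j * w₀ j = -q := by
    rw [hq, Finset.mul_sum, Finset.mul_sum, ← Finset.sum_add_distrib, ← Finset.sum_neg_distrib]
    refine Finset.sum_congr rfl fun j _ => ?_
    rcases hs j with h1 | h1
    · simp [hw₀, h1]
    · have hne0 : ¬ s j = 0 := by rw [h1]; norm_num
      simp only [hw₀, if_neg hne0, h1]
      field_simp
      ring
  have hmain : ∀ v : Fin n → ℝ, ∑ i, (v i * α i - ℓ (y i) (v i)) ≤ -h0 - q := by
    intro v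
    have := hkey v w₀ hw₀K
    rw [Finset.sum_sub_distrib]
    linarith
  set F : Fin n → ℝ → ℝ := fun i v => v * α i - ℓ (y i) v with hF
  have hFbdd : ∀ i, BddAbove (Set.range (F i)) := by
    intro i
    refine ⟨(-h0 - q) - ∑ k ∈ Finset.univ.erase i, F k 0, ?_⟩
    rintro _ ⟨v, rfl⟩
    have hm := hmain (Function.update (0 : Fin n → ℝ) i v)
    rw [← Finset.add_sum_erase _ _ (Finset.mem_univ i)] at hm
    have e1 : Function.update (0 : Fin n → ℝ) i v i = v := Function.update_self i v (0 : Fin n → ℝ)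
    have e2 : ∑ k ∈ Finset.univ.erase i,
        (Function.update (0 : Fin n → ℝ) i v k * α k
          - ℓ (y k) (Function.update (0 : Fin n → ℝ) i v k)) =
        ∑ k ∈ Finset.univ.erase i, F k 0 := by
      refine Finset.sum_congr rfl fun k hk => ?_
      rw [Function.update_of_ne (Finset.mem_erase.1 hk).1 v (0 : Fin n → ℝ)]
      rfl
    rw [e1, e2] at hm
    have : F i v = v * α i - ℓ (y i) v := rfl
    linarith
  set M : Fin n → ℝ := fun i => sSup (Set.range (F i)) with hM
  have hMsum : ∑ i, M i ≤ -h0 - q := by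
    refine le_of_forall_pos_le_add fun ε hε => ?_
    have hε' : 0 < ε / (n + 1) := by positivity
    have hchoice : ∀ i : Fin n, ∃ v : ℝ, M i - ε / (n + 1) < F i v := by
      intro i
      obtain ⟨_, ⟨v, rfl⟩, hv⟩ := exists_lt_of_lt_csSup (Set.range_nonempty (F i))
        (show M i - ε / (n + 1) < M i by linarith)
      exact ⟨v, hv⟩
    choose v hv using hchoice
    have h1 : ∑ i, (M i - ε / (n + 1)) ≤ ∑ i, F i (v i) :=
      Finset.sum_le_sum fun i _ => (hv i).le
    have h2 : ∑ i, F i (v i) ≤ -h0 - q := hmain v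
    have h3 : ∑ i, (M i - ε / (n + 1)) = ∑ i, M i - n * (ε / (n + 1)) := by
      rw [Finset.sum_sub_distrib, Finset.sum_const, Finset.card_univ, Fintype.card_fin,
        nsmul_eq_mul]
    have h4 : (n : ℝ) * (ε / (n + 1)) ≤ ε := by
      rw [mul_div_assoc']
      rw [div_le_iff₀ (by positivity : (0:ℝ) < (n:ℝ) + 1)]
      nlinarith [hε.le, Nat.cast_nonneg (α := ℝ) n]
    linarith
  have hlhatM : ∀ i, (⨆ u : ℝ, ((u * α i - ℓ (y i) u : ℝ) : EReal)) = ((M i : ℝ) : EReal) :=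
    fun i => ereal_isup_eq_coe_sSup (F i) (hFbdd i)
  refine ⟨α, h0, ?_, ?_⟩
  · intro ε hε
    obtain ⟨x, ⟨w, hwK, rfl⟩, hx⟩ := Real.lt_sInf_add_pos (hne 0) hε
    refine ⟨w, hwK, ?_⟩
    have he : Obj 0 w = ∑ i, ℓ (y i) (∑ j, X i j * w j) + 1 / (2 * γ) * ∑ j, (w j) ^ 2 := by
      rw [hObj]; simp
    rw [he] at hx
    exact hx
  · have e1 : (∑ i, ⨆ u : ℝ, ((u * α i - ℓ (y i) u : ℝ) : EReal))
        = (((∑ i, M i : ℝ)) : EReal) := by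
      rw [ereal_coe_sum]
      exact Finset.sum_congr rfl fun i _ => hlhatM i
    have hcast : -(∑ i, ⨆ u : ℝ, ((u * α i - ℓ (y i) u : ℝ) : EReal))
        - ((γ / 2 * ∑ j, s j * (∑ i, X i j * α i) ^ 2 : ℝ) : EReal)
        = (((-(∑ i, M i) - q) : ℝ) : EReal) := by
      rw [e1]
      show -((∑ i, M i : ℝ) : EReal) - ((q : ℝ) : EReal) = _
      rw [← EReal.coe_neg, ← EReal.coe_sub]
    rw [hcast]
    exact_mod_cast (show h0 ≤ -(∑ i, M i) - q by linarith)

private lemma weak_duality {n p : ℕ} (X : Matrix (Fin n) (Fin p) ℝ) (y : Fin n → ℝ)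
    {γ : ℝ} (hγ : 0 < γ) (ℓ : ℝ → ℝ → ℝ) (s : Fin p → ℝ) (w : Fin p → ℝ)
    (α : Fin n → ℝ) (hs : ∀ j, s j = 0 ∨ s j = 1) (hw : ∀ j, s j = 0 → w j = 0) :
    -(∑ i, ⨆ u : ℝ, ((u * α i - ℓ (y i) u : ℝ) : EReal))
        - ((γ / 2 * ∑ j, s j * (∑ i, X i j * α i) ^ 2 : ℝ) : EReal)
      ≤ ((∑ i, ℓ (y i) (∑ j, X i j * w j) + 1 / (2 * γ) * ∑ j, (w j) ^ 2 : ℝ) : EReal) := by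
  set ui : Fin n → ℝ := fun i => ∑ j, X i j * w j with hui
  set r : ℝ := ∑ i, (ui i * α i - ℓ (y i) (ui i)) with hr
  have hstep : ((r : ℝ) : EReal) ≤ ∑ i, ⨆ u : ℝ, ((u * α i - ℓ (y i) u : ℝ) : EReal) := by
    rw [hr, ereal_coe_sum]
    exact Finset.sum_le_sum fun i _ =>
      le_iSup (fun u : ℝ => ((u * α i - ℓ (y i) u : ℝ) : EReal)) (ui i)
  have hneg : -(∑ i, ⨆ u : ℝ, ((u * α i - ℓ (y i) u : ℝ) : EReal)) ≤ ((-r : ℝ) : EReal) := by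
    rw [EReal.coe_neg]
    exact EReal.neg_le_neg_iff.2 hstep
  have hsub := EReal.sub_le_sub hneg
    (le_refl ((γ / 2 * ∑ j, s j * (∑ i, X i j * α i) ^ 2 : ℝ) : EReal))
  refine hsub.trans ?_
  rw [← EReal.coe_sub, EReal.coe_le_coe_iff]
  -- real inequality
  have hswap : ∑ i, ui i * α i = ∑ j, (∑ i, X i j * α i) * w j := by
    rw [← sum_swap_mul X w α]
    exact Finset.sum_congr rfl fun i _ => by rw [hui]; ring
  have hsumr : r = ∑ i, ui i * α i - ∑ i, ℓ (y i) (ui i) := by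
    rw [hr, Finset.sum_sub_distrib]
  have hterm : 0 ≤ ∑ j, ((∑ i, X i j * α i) * w j + 1 / (2 * γ) * (w j) ^ 2
      + γ / 2 * (s j * (∑ i, X i j * α i) ^ 2)) := by
    refine Finset.sum_nonneg fun j _ => ?_
    rcases hs j with h1 | h1
    · rw [hw j h1, h1]
      simp
    · rw [h1, one_mul]
      have := key_sq hγ (w j) (∑ i, X i j * α i)
      linarith [this]
  rw [Finset.sum_add_distrib, Finset.sum_add_distrib, ← Finset.mul_sum, ← Finset.mul_sum] at hterm
  have : ∑ i, ℓ (y i) (ui i) = ∑ i, ℓ (y i) (∑ j, X i j * w j) := rfl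
  linarith [hterm, hsumr, hswap]

open Classical in
/-- The `ℓ₀` pseudo-norm: the number of nonzero entries of `w`. -/
noncomputable def norm0 {p : ℕ} (w : Fin p → ℝ) : ℕ :=
  (Finset.univ.filter fun j => w j ≠ 0).card

private lemma norm0_eq_sum {p : ℕ} (w : Fin p → ℝ) :
    ((norm0 w : ℕ) : ℝ) = ∑ j, if w j ≠ 0 then (1 : ℝ) else 0 := by
  unfold norm0
  rw [Finset.sum_boole]

/-- The ℓ₂-regularized cardinality-penalized problem has the same optimal value
as the penalized convex integer min-max problem. -/
theorem sparse_regression_penalized_cio_equiv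
    {n p : ℕ}
    (X : Matrix (Fin n) (Fin p) ℝ) (y : Fin n → ℝ)
    (γ : ℝ) (hγ : 0 < γ) (lam : ℝ) (hlam : 0 < lam)
    (ℓ : ℝ → ℝ → ℝ) (hconv : ∀ z : ℝ, ConvexOn ℝ Set.univ (ℓ z))
    (lhat : ℝ → ℝ → EReal)
    (hlhat : ∀ z a : ℝ, lhat z a = ⨆ u : ℝ, ((u * a - ℓ z u : ℝ) : EReal))
    (f : (Fin n → ℝ) → (Fin p → ℝ) → EReal)
    (hf : ∀ α s, f α s =
      -(∑ i, lhat (y i) (α i))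
        - ((γ / 2 * ∑ j, s j * (∑ i, X i j * α i) ^ 2 : ℝ) : EReal)) :
    (⨅ w : Fin p → ℝ,
        ((∑ i, ℓ (y i) (∑ j, X i j * w j)
            + 1 / (2 * γ) * ∑ j, (w j) ^ 2 + lam * (norm0 w : ℝ) : ℝ) : EReal))
      =
    (⨅ s : {s : Fin p → ℝ // ∀ j, s j = 0 ∨ s j = 1},
        ⨆ α : Fin n → ℝ, f α s.1 + ((lam * ∑ j, s.1 j : ℝ) : EReal)) := by
  classical
  apply le_antisymm
  · -- LHS ≤ RHS
    refine le_iInf fun sp => ?_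
    obtain ⟨s, hs⟩ := sp
    obtain ⟨α, h0, happrox, hdual⟩ := strong_duality X y hγ ℓ hconv s hs
    have hstep1 : (⨅ w : Fin p → ℝ,
        ((∑ i, ℓ (y i) (∑ j, X i j * w j)
            + 1 / (2 * γ) * ∑ j, (w j) ^ 2 + lam * (norm0 w : ℝ) : ℝ) : EReal))
        ≤ ((h0 + lam * ∑ j, s j : ℝ) : EReal) := by
      refine ereal_le_coe_of_forall fun ε hε => ?_
      obtain ⟨w, hwK, hwlt⟩ := happrox ε hε
      refine (iInf_le _ w).trans ?_
      rw [EReal.coe_le_coe_iff]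
      have hnorm : (norm0 w : ℝ) ≤ ∑ j, s j := by
        rw [norm0_eq_sum]
        refine Finset.sum_le_sum fun j _ => ?_
        by_cases h : w j = 0
        · simp only [h, ne_eq, not_true_eq_false, if_false]
          rcases hs j with h' | h' <;> rw [h'] <;> norm_num
        · have hsj : s j = 1 := by
            rcases hs j with h' | h'
            · exact absurd (hwK j h') h
            · exact h'
          simp [h, hsj]
      have hlam2 : lam * (norm0 w : ℝ) ≤ lam * ∑ j, s j :=
        mul_le_mul_of_nonneg_left hnorm hlam.le
      linarith
    refine hstep1.trans ?_
    refine le_trans ?_ (le_iSup (fun α' => f α' s + ((lam * ∑ j, s j : ℝ) : EReal)) α)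
    rw [hf α s]
    simp only [hlhat]
    rw [EReal.coe_add]
    exact add_le_add_left hdual _
  · -- RHS ≤ LHS
    refine le_iInf fun w => ?_
    set sw : Fin p → ℝ := fun j => if w j = 0 then 0 else 1 with hsw
    have hsws : ∀ j, sw j = 0 ∨ sw j = 1 := fun j => by
      by_cases h : w j = 0 <;> simp [hsw, h]
    refine (iInf_le _ ⟨sw, hsws⟩).trans ?_
    refine iSup_le fun α => ?_
    have hwK : ∀ j, sw j = 0 → w j = 0 := fun j hj => by
      by_cases h : w j = 0
      · exact h
      · simp [hsw, h] at hj
    have hwd := weak_duality X y hγ ℓ sw w α hsws hwK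
    rw [hf α sw]
    simp only [hlhat]
    have hcard : lam * ∑ j, sw j = lam * (norm0 w : ℝ) := by
      congr 1
      rw [norm0_eq_sum]
      refine Finset.sum_congr rfl fun j _ => ?_
      by_cases h : w j = 0 <;> simp [hsw, h]
    have hsplit : ((∑ i, ℓ (y i) (∑ j, X i j * w j)
        + 1 / (2 * γ) * ∑ j, (w j) ^ 2 + lam * (norm0 w : ℝ) : ℝ) : EReal)
        = ((∑ i, ℓ (y i) (∑ j, X i j * w j)
            + 1 / (2 * γ) * ∑ j, (w j) ^ 2 : ℝ) : EReal)
          + ((lam * ∑ j, sw j : ℝ) : EReal) := by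
      rw [hcard, ← EReal.coe_add]
    rw [hsplit]
    exact add_le_add_left hwd _
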